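/- Let G=(V,E) be a finite directed graph with source node r and at least two vertices, let c : E → ℝ with c_e ≥ 0 be edge capacities, and let S ⊆ {0,1}^E be a finite nonempty activation set. Let s : ℕ → S be any sequence of activation vectors and let R : V → ℕ → ℝ be any nonnegative functions satisfying the cut-set bound R_i(T) ≤ Σ_{t=0}^{T−1} Σ_{e∈E_U} c_e·s_e(t) for every proper cut U, every node i ∉ U, and every T ≥ 1. Then min_{i∈V} liminf_{T→∞} R_i(T)/T ≤ max_{β∈conv(S)} min_{U proper cut} Σ_{e∈E_U} c_e·β_e. -/

import Mathlib

open Filter Finset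

lemma my_liminf_nonneg {u : ℕ → ℝ} (h : ∀ n, 0 ≤ u n) :
    0 ≤ liminf u atTop := by
  rw [liminf, limsInf]
  refine Real.sSup_nonneg' ⟨0, ?_, le_refl 0⟩
  rw [Set.mem_setOf_eq, eventually_map]
  exact Eventually.of_forall h

set_option maxHeartbeats 2000000 in
/-- cut-set upper bound on the broadcast rate (Theorem 1 of the paper,
deterministic per-sample-path form). -/
theorem stmt_0 {V : Type*} [Fintype V] [DecidableEq V] (r : V)
    (hV : 2 ≤ Fintype.card V)
    (E : Finset (V × V)) (c : V × V → ℝ) (hc : ∀ e, 0 ≤ c e)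
    (S : Finset ((V × V) → ℝ)) (hS : S.Nonempty)
    (hSbin : ∀ s ∈ S, ∀ e, s e = 0 ∨ s e = 1)
    (s : ℕ → (V × V) → ℝ) (hs : ∀ t, s t ∈ S)
    (R : V → ℕ → ℝ) (hR : ∀ i T, 0 ≤ R i T)
    (hcut : ∀ U : Finset V, r ∈ U → U ≠ Finset.univ →
      ∀ i ∉ U, ∀ T : ℕ, 1 ≤ T →
        R i T ≤ ∑ t ∈ Finset.range T,
          ∑ e ∈ E.filter (fun e => e.1 ∈ U ∧ e.2 ∉ U), c e * s t e) :
    sInf {x : ℝ | ∃ i : V, x = liminf (fun T : ℕ => R i T / T) atTop} ≤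
      sSup {x : ℝ | ∃ β ∈ convexHull ℝ (S : Set ((V × V) → ℝ)),
        x = sInf {y : ℝ | ∃ U : Finset V, r ∈ U ∧ U ≠ Finset.univ ∧
          y = ∑ e ∈ E.filter (fun e => e.1 ∈ U ∧ e.2 ∉ U), c e * β e}} := by
  classical
  set cutval : Finset V → ((V × V) → ℝ) → ℝ :=
    fun U β => ∑ e ∈ E.filter (fun e => e.1 ∈ U ∧ e.2 ∉ U), c e * β e with hcutval
  set C : ℝ := ∑ e ∈ E, c e with hC
  -- basic facts about s
  have hs01 : ∀ t e, 0 ≤ s t e ∧ s t e ≤ 1 := by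
    intro t e
    rcases hSbin _ (hs t) e with h | h <;> simp [h]
  -- β entries in [0,1] for β ∈ conv S
  have hconv01 : ∀ β ∈ convexHull ℝ (S : Set ((V × V) → ℝ)), ∀ e, 0 ≤ β e ∧ β e ≤ 1 := by
    intro β hβ e
    have hsub : (S : Set ((V × V) → ℝ)) ⊆ {f | 0 ≤ f e ∧ f e ≤ 1} := by
      intro f hf
      rcases hSbin f hf e with h | h <;> simp [h]
    have hcvx : Convex ℝ {f : (V × V) → ℝ | 0 ≤ f e ∧ f e ≤ 1} := by
      have : {f : (V × V) → ℝ | 0 ≤ f e ∧ f e ≤ 1}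
          = (fun f : (V × V) → ℝ => f e) ⁻¹' (Set.Icc 0 1) := by
        ext f; simp [Set.mem_Icc]
      rw [this]
      exact (convex_Icc (0:ℝ) 1).is_linear_preimage (LinearMap.proj e).isLinear
    exact convexHull_min hsub hcvx hβ
  -- cut values are in [0, C]
  have hcv0 : ∀ U, ∀ β ∈ convexHull ℝ (S : Set ((V × V) → ℝ)), 0 ≤ cutval U β := by
    intro U β hβ
    exact Finset.sum_nonneg fun e _ => mul_nonneg (hc e) (hconv01 β hβ e).1
  have hcvC : ∀ U, ∀ β ∈ convexHull ℝ (S : Set ((V × V) → ℝ)), cutval U β ≤ C := by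
    intro U β hβ
    calc cutval U β ≤ ∑ e ∈ E.filter (fun e => e.1 ∈ U ∧ e.2 ∉ U), c e :=
          Finset.sum_le_sum fun e _ => by
            nlinarith [(hconv01 β hβ e).2, hc e, (hconv01 β hβ e).1]
      _ ≤ C := Finset.sum_le_sum_of_subset_of_nonneg (Finset.filter_subset _ _)
          (fun e _ _ => hc e)
  -- {r} is a proper cut
  obtain ⟨v, hvr⟩ := Fintype.exists_ne_of_one_lt_card (by omega : 1 < Fintype.card V) r
  have hrprop : ({r} : Finset V) ≠ Finset.univ := by
    intro h
    have : v ∈ ({r} : Finset V) := h ▸ Finset.mem_univ v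
    simp at this
    exact hvr this
  -- cut set for a given β is nonempty and bounded below
  have hcsne : ∀ β, {y : ℝ | ∃ U : Finset V, r ∈ U ∧ U ≠ Finset.univ ∧ y = cutval U β}.Nonempty :=
    fun β => ⟨cutval {r} β, {r}, Finset.mem_singleton_self r, hrprop, rfl⟩
  have hcsbdd : ∀ β ∈ convexHull ℝ (S : Set ((V × V) → ℝ)),
      BddBelow {y : ℝ | ∃ U : Finset V, r ∈ U ∧ U ≠ Finset.univ ∧ y = cutval U β} := by
    intro β hβ
    exact ⟨0, by rintro y ⟨U, -, -, rfl⟩; exact hcv0 U β hβ⟩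
  -- running averages
  set g : ℕ → ((V × V) → ℝ) := fun k => ((k : ℝ) + 1)⁻¹ • ∑ t ∈ Finset.range (k + 1), s t
    with hg
  have hgmem : ∀ k, g k ∈ convexHull ℝ (S : Set ((V × V) → ℝ)) := by
    intro k
    have : g k = ∑ t ∈ Finset.range (k + 1), ((k : ℝ) + 1)⁻¹ • s t := by
      simp only [hg, Finset.smul_sum]
    rw [this]
    refine (convex_convexHull ℝ _).sum_mem (fun t _ => by positivity) ?_
      (fun t _ => subset_convexHull ℝ _ (hs t))
    rw [Finset.sum_const, Finset.card_range, nsmul_eq_mul]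
    field_simp
    exact Nat.cast_succ k
  -- compactness: subsequence converging to β*
  obtain ⟨β, hβmem, φ, hφmono, hφtend⟩ :=
    ((S : Set ((V × V) → ℝ)).toFinite.isCompact_convexHull (𝕜 := ℝ)).tendsto_subseq hgmem
  -- candidate element of the RHS set
  set x0 : ℝ := sInf {y : ℝ | ∃ U : Finset V, r ∈ U ∧ U ≠ Finset.univ ∧ y = cutval U β}
    with hx0
  have hx0mem : x0 ∈ {x : ℝ | ∃ β ∈ convexHull ℝ (S : Set ((V × V) → ℝ)),
      x = sInf {y : ℝ | ∃ U : Finset V, r ∈ U ∧ U ≠ Finset.univ ∧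
        y = ∑ e ∈ E.filter (fun e => e.1 ∈ U ∧ e.2 ∉ U), c e * β e}} := ⟨β, hβmem, rfl⟩
  -- RHS set bounded above by C
  have hRHSbdd : BddAbove {x : ℝ | ∃ β ∈ convexHull ℝ (S : Set ((V × V) → ℝ)),
      x = sInf {y : ℝ | ∃ U : Finset V, r ∈ U ∧ U ≠ Finset.univ ∧
        y = ∑ e ∈ E.filter (fun e => e.1 ∈ U ∧ e.2 ∉ U), c e * β e}} := by
    refine ⟨C, ?_⟩
    rintro x ⟨β', hβ', rfl⟩
    calc sInf {y : ℝ | ∃ U : Finset V, r ∈ U ∧ U ≠ Finset.univ ∧ y = cutval U β'}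
        ≤ cutval {r} β' := csInf_le (hcsbdd β' hβ')
          ⟨{r}, Finset.mem_singleton_self r, hrprop, rfl⟩
      _ ≤ C := hcvC _ β' hβ'
  refine le_trans ?_ (le_csSup hRHSbdd hx0mem)
  -- LHS set bounded below by 0
  have hLHSbdd : BddBelow {x : ℝ | ∃ i : V, x = liminf (fun T : ℕ => R i T / T) atTop} := by
    refine ⟨0, ?_⟩
    rintro x ⟨i, rfl⟩
    exact my_liminf_nonneg fun T => div_nonneg (hR i T) (Nat.cast_nonneg T)
  -- main step: sInf LHS ≤ every cut value of β
  refine le_csInf (hcsne β) ?_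
  rintro y ⟨U, hrU, hUne, rfl⟩
  -- pick i outside U
  have : ∃ i, i ∉ U := by
    by_contra h
    push_neg at h
    exact hUne (Finset.eq_univ_iff_forall.2 h)
  obtain ⟨i, hiU⟩ := this
  refine le_trans (csInf_le hLHSbdd ⟨i, rfl⟩) ?_
  -- bound: R i T / T ≤ C for T ≥ 1, and R i (k+1)/(k+1) ≤ cutval U (g k)
  have hkey : ∀ k : ℕ, R i (k + 1) / ((k : ℝ) + 1) ≤ cutval U (g k) := by
    intro k
    have hT := hcut U hrU hUne i hiU (k + 1) (Nat.le_add_left 1 k)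
    have hrw : cutval U (g k) = ((k : ℝ) + 1)⁻¹ *
        ∑ t ∈ Finset.range (k + 1), ∑ e ∈ E.filter (fun e => e.1 ∈ U ∧ e.2 ∉ U),
          c e * s t e := by
      have lhs : cutval U (g k) = ∑ e ∈ E.filter (fun e => e.1 ∈ U ∧ e.2 ∉ U),
          ∑ t ∈ Finset.range (k + 1), ((k : ℝ) + 1)⁻¹ * (c e * s t e) := by
        refine Finset.sum_congr rfl fun e _ => ?_
        simp only [hg, Pi.smul_apply, Finset.sum_apply, smul_eq_mul]
        rw [Finset.mul_sum, Finset.mul_sum]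
        exact Finset.sum_congr rfl fun t _ => by ring
      rw [lhs, Finset.sum_comm, Finset.mul_sum]
      refine Finset.sum_congr rfl fun t _ => ?_
      rw [Finset.mul_sum]
    rw [hrw, div_eq_inv_mul]
    have hpos : (0:ℝ) < (k : ℝ) + 1 := by positivity
    apply mul_le_mul_of_nonneg_left _ (by positivity)
    exact_mod_cast hT
  have hbound : ∀ T : ℕ, 1 ≤ T → R i T / T ≤ C := by
    intro T hT
    obtain ⟨k, rfl⟩ := Nat.exists_eq_add_of_le hT
    rw [Nat.add_comm]
    have hcast : ((k + 1 : ℕ) : ℝ) = (k : ℝ) + 1 := by push_cast; ring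
    calc R i (k + 1) / ((k + 1 : ℕ) : ℝ) = R i (k + 1) / ((k : ℝ) + 1) := by rw [hcast]
      _ ≤ cutval U (g k) := hkey k
      _ ≤ C := hcvC U (g k) (hgmem k)
  -- subsequence handling
  set u : ℕ → ℝ := fun T => R i T / T with hu
  have hu0 : ∀ T, 0 ≤ u T := fun T => div_nonneg (hR i T) (Nat.cast_nonneg T)
  set ψ : ℕ → ℕ := fun k => φ k + 1 with hψ
  have hψtend : Tendsto ψ atTop atTop :=
    tendsto_atTop_mono (fun k => (hφmono.id_le k).trans (Nat.le_succ _)) tendsto_id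
  have hmaple : map ψ atTop ≤ atTop := hψtend
  -- limit of cut values along the subsequence
  set a : ℕ → ℝ := fun k => cutval U (g (φ k)) with ha
  have hatend : Tendsto a atTop (nhds (cutval U β)) := by
    simp only [ha, hcutval]
    refine tendsto_finset_sum _ fun e _ => ?_
    exact Tendsto.const_mul (c e) (tendsto_pi_nhds.mp hφtend e)
  have h1 : liminf u atTop ≤ liminf u (map ψ atTop) := by
    refine liminf_le_liminf_of_le hmaple ⟨0, ?_⟩ (IsBoundedUnder.isCoboundedUnder_ge ⟨C, ?_⟩)
    · rw [eventually_map]; exact Eventually.of_forall hu0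
    · rw [eventually_map, eventually_map]
      exact Eventually.of_forall fun k => hbound (ψ k) (Nat.le_add_left 1 (φ k))
  have hle : ∀ k, (u ∘ ψ) k ≤ a k := by
    intro k
    have hk := hkey (φ k)
    have hcst : ((φ k + 1 : ℕ) : ℝ) = ((φ k : ℝ) + 1) := by push_cast; ring
    show u (ψ k) ≤ a k
    simp only [hu, hψ, ha]
    rw [hcst]
    exact hk
  have h2 : liminf u (map ψ atTop) ≤ liminf a atTop := by
    rw [← liminf_comp]
    refine liminf_le_liminf (Eventually.of_forall hle) ⟨0, ?_⟩
      (IsBoundedUnder.isCoboundedUnder_ge ⟨C, ?_⟩)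
    · rw [eventually_map]
      exact Eventually.of_forall fun k => hu0 (ψ k)
    · rw [eventually_map]
      exact Eventually.of_forall fun k => hcvC U (g (φ k)) (hgmem (φ k))
  have h3 : liminf a atTop = cutval U β := hatend.liminf_eq
  calc liminf (fun T : ℕ => R i T / T) atTop = liminf u atTop := rfl
    _ ≤ liminf u (map ψ atTop) := h1
    _ ≤ liminf a atTop := h2
    _ = cutval U β := h3
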